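/- Let β be a mixed base, m ≥ 1, X ∈ ℕ^m, n = σ_β(X), h < n, and N = max{L : n_L ≠ h_L}. Suppose D ∈ ℕ^m satisfies X_{≤N} - D ∈ ℕ^m componentwise (where X_{≤N} = (x^i mod β̂_{N+1})_i), X - D ∈ ℕ^m, and σ_β(X_{≤N} - D) = h mod β̂_{N+1}. Then σ_β(X - D) = h. -/

import Mathlib

open scoped BigOperators

/-- β̂_L = β_0 ⋯ β_{L-1}, the place value of digit L in mixed base β. -/
def bhat (β : ℕ → ℕ) (L : ℕ) : ℕ := ∏ i ∈ Finset.range L, β i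

/-- The L-th digit of n in the mixed base β. -/
def mdigit (β : ℕ → ℕ) (n L : ℕ) : ℕ := n / bhat β L % β L

/-- Digit-wise addition modulo β_L in mixed base β. -/
def moplus (β : ℕ → ℕ) (n h : ℕ) : ℕ :=
  ∑ L ∈ Finset.range (n + h + 1), ((mdigit β n L + mdigit β h L) % β L) * bhat β L

/-- Digit-wise subtraction modulo β_L in mixed base β. -/
def mominus (β : ℕ → ℕ) (n h : ℕ) : ℕ :=
  ∑ L ∈ Finset.range (n + h + 1), ((β L + mdigit β n L - mdigit β h L) % β L) * bhat β L

/-- σ_β(X) = x^0 ⊕ ⋯ ⊕ x^{m-1}: the digit-wise Nim sum in mixed base β. -/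
def msigma (β : ℕ → ℕ) {m : ℕ} (X : Fin m → ℕ) : ℕ :=
  ∑ L ∈ Finset.range (∑ i, X i + 1), ((∑ i, mdigit β (X i) L) % β L) * bhat β L

/-- Hamming weight: number of nonzero components. -/
def hamwt {m : ℕ} (C : Fin m → ℕ) : ℕ := (Finset.univ.filter (fun i => C i ≠ 0)).card

/-- ord_β(n): the largest L with β̂_L ∣ n (⊤ for n = 0). -/
def mord (β : ℕ → ℕ) (n : ℕ) : ℕ∞ :=
  if n = 0 then ⊤ else (Nat.findGreatest (fun L => bhat β L ∣ n) n : ℕ∞)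

/-- 𝒞 is a Sprague-Grundy system of σ_β: its members are nonzero moves and
σ_β satisfies the mex recursion of the take-away game Γ(ℕ^m, 𝒞), i.e. σ_β is the
Sprague-Grundy function of that game. -/
def IsSGSystem (β : ℕ → ℕ) {m : ℕ} (𝒞 : Set (Fin m → ℕ)) : Prop :=
  (∀ C ∈ 𝒞, C ≠ 0) ∧
  ∀ X : Fin m → ℕ, msigma β X =
    sInf {n : ℕ | ∀ C ∈ 𝒞, (∀ i, C i ≤ X i) → msigma β (fun i => X i - C i) ≠ n}

section Aux

variable {β : ℕ → ℕ}

lemma bhat_succ (β : ℕ → ℕ) (L : ℕ) : bhat β (L + 1) = bhat β L * β L :=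
  Finset.prod_range_succ _ _

lemma bhat_pos (hβ : ∀ L, 2 ≤ β L) (L : ℕ) : 0 < bhat β L :=
  Finset.prod_pos fun i _ => lt_of_lt_of_le two_pos (hβ i)

lemma two_pow_le_bhat (hβ : ∀ L, 2 ≤ β L) (L : ℕ) : 2 ^ L ≤ bhat β L := by
  induction L with
  | zero => simp [bhat]
  | succ K ih =>
    rw [bhat_succ, pow_succ]
    exact Nat.mul_le_mul ih (hβ K)

lemma bhat_dvd (β : ℕ → ℕ) {K L : ℕ} (h : K ≤ L) : bhat β K ∣ bhat β L :=
  Finset.prod_dvd_prod_of_subset _ _ _ (Finset.range_subset_range.2 h)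

lemma mdigit_eq_zero_of_lt (h : n < bhat β L) : mdigit β n L = 0 := by
  unfold mdigit
  rw [Nat.div_eq_of_lt h, Nat.zero_mod]

lemma lt_bhat (hβ : ∀ L, 2 ≤ β L) {n L : ℕ} (h : n < L) : n < bhat β L :=
  lt_of_lt_of_le (lt_of_lt_of_le h (Nat.le_of_lt (Nat.lt_two_pow_self (n := L)))) (two_pow_le_bhat hβ L)

/-- Two naturals with the same mixed-base digits are equal. -/
lemma eq_of_mdigit_eq (hβ : ∀ L, 2 ≤ β L) {a b : ℕ}
    (h : ∀ L, mdigit β a L = mdigit β b L) : a = b := by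
  have key : ∀ K, a % bhat β K = b % bhat β K := by
    intro K
    induction K with
    | zero => simp [bhat, Nat.mod_one]
    | succ K ih =>
      rw [bhat_succ, Nat.mod_mul, Nat.mod_mul, ih, ← mdigit, ← mdigit, h K]
  have hK : ∀ {c : ℕ}, c < max a b + 1 → c % bhat β (max a b + 1) = c := fun hc =>
    Nat.mod_eq_of_lt (lt_bhat hβ hc)
  have := key (max a b + 1)
  rwa [hK (by omega), hK (by omega)] at this

lemma mdigit_add_mul {A L : ℕ} (hβ : ∀ L, 2 ≤ β L) (hA : A < bhat β L) (x : ℕ) :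
    mdigit β (A + x * bhat β L) L = x % β L := by
  unfold mdigit
  rw [mul_comm x, Nat.add_mul_div_left _ _ (bhat_pos hβ L), Nat.div_eq_of_lt hA, Nat.zero_add]

lemma rep_lt (hβ : ∀ L, 2 ≤ β L) (d : ℕ → ℕ) (hd : ∀ L, d L < β L) (K : ℕ) :
    ∑ j ∈ Finset.range K, d j * bhat β j < bhat β K := by
  induction K with
  | zero => simpa [bhat] using bhat_pos hβ 0
  | succ K ih =>
    rw [Finset.sum_range_succ, bhat_succ]
    calc ∑ j ∈ Finset.range K, d j * bhat β j + d K * bhat β K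
        < bhat β K + d K * bhat β K := by omega
      _ = (d K + 1) * bhat β K := by ring
      _ ≤ β K * bhat β K := Nat.mul_le_mul_right _ (hd K)
      _ = bhat β K * β K := mul_comm _ _

lemma mdigit_rep (hβ : ∀ L, 2 ≤ β L) (d : ℕ → ℕ) (hd : ∀ L, d L < β L) {K L : ℕ}
    (hL : L < K) : mdigit β (∑ j ∈ Finset.range K, d j * bhat β j) L = d L := by
  have hsplit : Finset.range K = Finset.range (L + 1) ∪ Finset.Ico (L + 1) K := by
    rw [Finset.range_eq_Ico, Finset.range_eq_Ico]
    exact (Finset.Ico_union_Ico_eq_Ico (Nat.zero_le _) hL).symm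
  have hdisj : Disjoint (Finset.range (L + 1)) (Finset.Ico (L + 1) K) := by
    simp [Finset.disjoint_left]; omega
  rw [hsplit, Finset.sum_union hdisj, Finset.sum_range_succ]
  obtain ⟨c, hc⟩ : bhat β (L + 1) ∣ ∑ j ∈ Finset.Ico (L + 1) K, d j * bhat β j :=
    Finset.dvd_sum fun j hj => Dvd.dvd.mul_left (bhat_dvd β (Finset.mem_Ico.1 hj).1) _
  rw [hc, bhat_succ, show ∑ x ∈ Finset.range L, d x * bhat β x + d L * bhat β L
        + bhat β L * β L * c
      = ∑ x ∈ Finset.range L, d x * bhat β x + (d L + β L * c) * bhat β L by ring,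
    mdigit_add_mul hβ (rep_lt hβ d hd L), Nat.add_mul_mod_self_left, Nat.mod_eq_of_lt (hd L)]

/-- The key digit formula for the Nim sum. -/
lemma mdigit_msigma (hβ : ∀ L, 2 ≤ β L) {m : ℕ} (X : Fin m → ℕ) (L : ℕ) :
    mdigit β (msigma β X) L = (∑ i, mdigit β (X i) L) % β L := by
  have hd : ∀ L, (∑ i, mdigit β (X i) L) % β L < β L :=
    fun L => Nat.mod_lt _ (lt_of_lt_of_le two_pos (hβ L))
  rcases lt_or_ge L (∑ i, X i + 1) with hL | hL
  · exact mdigit_rep hβ _ hd hL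
  · have h1 : mdigit β (msigma β X) L = 0 :=
      mdigit_eq_zero_of_lt (lt_of_lt_of_le (rep_lt hβ _ hd _)
        (Nat.le_of_dvd (bhat_pos hβ L) (bhat_dvd β hL)))
    have h2 : ∀ i : Fin m, mdigit β (X i) L = 0 := by
      intro i
      refine mdigit_eq_zero_of_lt (lt_bhat hβ ?_)
      have : X i ≤ ∑ j, X j := Finset.single_le_sum (fun j _ => Nat.zero_le _) (Finset.mem_univ i)
      omega
    simp [h1, h2]

/-- Digits below N+1 only depend on the remainder mod β̂_{N+1}. -/
lemma mdigit_low (hβ : ∀ L, 2 ≤ β L) {q r L N : ℕ} (hL : L ≤ N) :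
    mdigit β (q * bhat β (N + 1) + r) L = mdigit β r L := by
  obtain ⟨t, ht⟩ : bhat β (L + 1) ∣ bhat β (N + 1) := bhat_dvd β (by omega)
  unfold mdigit
  rw [add_comm, ht, bhat_succ, show q * (bhat β L * β L * t) = (q * (β L * t)) * bhat β L by ring,
    Nat.add_mul_div_right _ _ (bhat_pos hβ L), show r / bhat β L + q * (β L * t)
      = r / bhat β L + β L * (q * t) by ring, Nat.add_mul_mod_self_left]

/-- Digits above N don't depend on the remainder mod β̂_{N+1}. -/
lemma mdigit_high (hβ : ∀ L, 2 ≤ β L) {q r r' L N : ℕ} (hr : r < bhat β (N + 1))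
    (hr' : r' < bhat β (N + 1)) (hL : N < L) :
    mdigit β (q * bhat β (N + 1) + r) L = mdigit β (q * bhat β (N + 1) + r') L := by
  obtain ⟨t, ht⟩ : bhat β (N + 1) ∣ bhat β L := bhat_dvd β (by omega)
  have hB := bhat_pos hβ (N + 1)
  have key : ∀ s, s < bhat β (N + 1) →
      (q * bhat β (N + 1) + s) / bhat β L = q / t := by
    intro s hs
    rw [ht, ← Nat.div_div_eq_div_mul, add_comm, Nat.add_mul_div_right _ _ hB,
      Nat.div_eq_of_lt hs, Nat.zero_add]
  unfold mdigit
  rw [key r hr, key r' hr']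

end Aux

/-- If D covers the truncation X_{≤N} at h mod β̂_{N+1}, where N is the top
digit where n and h differ, then D covers X at h. -/
theorem stmt15 (β : ℕ → ℕ) (hβ : ∀ L, 2 ≤ β L) {m : ℕ} (hm : 1 ≤ m)
    (X D : Fin m → ℕ) (n h N : ℕ) (hn : n = msigma β X) (hh : h < n)
    (hN : mdigit β n N ≠ mdigit β h N)
    (hNmax : ∀ L, N < L → mdigit β n L = mdigit β h L)
    (hDle : ∀ i, D i ≤ X i % bhat β (N + 1))
    (hDle' : ∀ i, D i ≤ X i)
    (hDcov : msigma β (fun i => X i % bhat β (N + 1) - D i) = h % bhat β (N + 1)) :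
    msigma β (fun i => X i - D i) = h := by
  set B := bhat β (N + 1) with hBdef
  have hBpos : 0 < B := bhat_pos hβ (N + 1)
  refine eq_of_mdigit_eq hβ fun L => ?_
  have hdecomp : ∀ i, X i - D i = (X i / B) * B + (X i % B - D i) := by
    intro i
    calc X i - D i = X i / B * B + X i % B - D i := by rw [Nat.div_add_mod']
      _ = X i / B * B + (X i % B - D i) := Nat.add_sub_assoc (hDle i) _
  have hhdec : h = (h / B) * B + h % B := (Nat.div_add_mod' h B).symm
  rcases le_or_gt L N with hL | hL
  · have hdig : ∀ i, mdigit β (X i - D i) L = mdigit β (X i % B - D i) L := by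
      intro i; rw [hdecomp i, mdigit_low hβ hL]
    have hh' : mdigit β h L = mdigit β (h % B) L := by
      conv_lhs => rw [hhdec]
      rw [mdigit_low hβ hL]
    rw [mdigit_msigma hβ, hh', ← hDcov, mdigit_msigma hβ]
    congr 1
    exact Finset.sum_congr rfl fun i _ => hdig i
  · have hdig : ∀ i, mdigit β (X i - D i) L = mdigit β (X i) L := by
      intro i
      conv_rhs => rw [show X i = (X i / B) * B + X i % B from (Nat.div_add_mod' (X i) B).symm]
      rw [hdecomp i]
      exact mdigit_high hβ (lt_of_le_of_lt (Nat.sub_le _ _) (Nat.mod_lt _ hBpos))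
        (Nat.mod_lt _ hBpos) hL
    have hnh := hNmax L hL
    rw [hn] at hnh
    rw [mdigit_msigma hβ, ← hnh, mdigit_msigma hβ]
    congr 1
    exact Finset.sum_congr rfl fun i _ => hdig i
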